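/- For every set partition π of {1,…,n} and every subset S ⊆ π, the number of right restricted crossings satisfies rc(S,π) = rc(π) + Σ_{B∈S} #{ C ∈ π : min(C) < min(B) < max(C) }. -/
import Mathlib


open scoped BigOperators

/-- The number of right restricted crossings of the extended partition `(S, π)` at the point
`k`:  if `k` lies in a block `B ∈ π` and is not the maximum of `B`, then with
`j = min{ i ∈ B : i > k }` it is the number of blocks `C ∈ π` meeting `{k+1,…,j−1}` such that
`C ∈ S` or `C` meets `{1,…,k}`; it is `0` if `k = max B`. -/
noncomputable def rcAt (π S : Finset (Finset ℕ)) (k : ℕ) : ℕ :=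
  (π.filter (fun C =>
      (∃ B ∈ π, k ∈ B ∧ ∃ j ∈ B, k < j ∧ (∀ i ∈ B, k < i → j ≤ i) ∧
        (C ∩ Finset.Ioo k j).Nonempty)
      ∧ (C ∈ S ∨ (C ∩ Finset.Icc 1 k).Nonempty))).card

/-- The total number of right restricted crossings `rc(S,π) = Σ_{k=1}^n rc(k,S,π)` of an
extended partition `(S,π)` of `{1,…,n}`. -/
noncomputable def rc (n : ℕ) (π S : Finset (Finset ℕ)) : ℕ :=
  ∑ k ∈ Finset.Icc 1 n, rcAt π S k

/-- The block of `π` containing `k` (junk value if there is none). -/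
noncomputable def blkOf (π : Finset (Finset ℕ)) (k : ℕ) : Finset ℕ :=
  if h : ∃ B ∈ π, k ∈ B then h.choose else ∅

lemma blkOf_eq {π : Finset (Finset ℕ)}
    (hdisj : ∀ B ∈ π, ∀ C ∈ π, B ≠ C → Disjoint B C)
    {B : Finset ℕ} {k : ℕ} (hB : B ∈ π) (hk : k ∈ B) : blkOf π k = B := by
  have h : ∃ B ∈ π, k ∈ B := ⟨B, hB, hk⟩
  rw [blkOf, dif_pos h]
  obtain ⟨hmem, hkmem⟩ := h.choose_spec
  by_contra hne
  exact Finset.disjoint_left.mp (hdisj _ hmem _ hB hne) hkmem hk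

/-- Key counting lemma: for a fixed block `B`, the number of points `k` whose gap straddles
`B` (with `B` entirely above `k`) equals the number of blocks straddling `min B`. -/
lemma key_count (n : ℕ) (π : Finset (Finset ℕ))
    (hempty : ∅ ∉ π)
    (hdisj : ∀ B ∈ π, ∀ C ∈ π, B ≠ C → Disjoint B C)
    (hcover : π.biUnion id = Finset.Icc 1 n)
    (B : Finset ℕ) (hB : B ∈ π) :
    ((Finset.Icc 1 n).filter (fun k =>
        (∃ D ∈ π, k ∈ D ∧ ∃ j ∈ D, k < j ∧ (∀ i ∈ D, k < i → j ≤ i) ∧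
          (B ∩ Finset.Ioo k j).Nonempty)
        ∧ ¬ (B ∩ Finset.Icc 1 k).Nonempty)).card
      = (π.filter (fun C =>
          (∃ c ∈ C, ∀ b ∈ B, c < b) ∧ (∃ c ∈ C, ∃ b ∈ B, b < c))).card := by
  classical
  have hBne : B.Nonempty := by
    rcases Finset.eq_empty_or_nonempty B with h | h
    · exact absurd (h ▸ hB) hempty
    · exact h
  set m : ℕ := B.min' hBne with hm
  have hmB : m ∈ B := B.min'_mem hBne
  have hmem_blocks : ∀ {D : Finset ℕ}, D ∈ π → ∀ {x : ℕ}, x ∈ D → x ∈ Finset.Icc 1 n := by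
    intro D hD x hx
    rw [← hcover]
    exact Finset.mem_biUnion.mpr ⟨D, hD, hx⟩
  refine Finset.card_bij (fun k _ => blkOf π k) ?_ ?_ ?_
  · -- maps into target
    intro k hk
    simp only [Finset.mem_filter] at hk
    obtain ⟨hkIcc, ⟨D, hD, hkD, j, hjD, hkj, hsucc, hint⟩, hnQ⟩ := hk
    have hbl : blkOf π k = D := blkOf_eq hdisj hD hkD
    show blkOf π k ∈ _
    rw [hbl]
    have hBabove : ∀ b ∈ B, k < b := by
      intro b hb
      by_contra hle
      push_neg at hle
      have hb1 : 1 ≤ b := (Finset.mem_Icc.mp (hmem_blocks hB hb)).1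
      exact hnQ ⟨b, Finset.mem_inter.mpr ⟨hb, Finset.mem_Icc.mpr ⟨hb1, hle⟩⟩⟩
    refine Finset.mem_filter.mpr ⟨hD, ⟨k, hkD, hBabove⟩, ?_⟩
    obtain ⟨b, hbint⟩ := hint
    rw [Finset.mem_inter, Finset.mem_Ioo] at hbint
    exact ⟨j, hjD, b, hbint.1, hbint.2.2⟩
  · -- injective
    intro k₁ hk₁ k₂ hk₂ heq
    simp only [Finset.mem_filter] at hk₁ hk₂
    obtain ⟨_, ⟨D₁, hD₁, hkD₁, j₁, hjD₁, hkj₁, hsucc₁, hint₁⟩, hnQ₁⟩ := hk₁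
    obtain ⟨_, ⟨D₂, hD₂, hkD₂, j₂, hjD₂, hkj₂, hsucc₂, hint₂⟩, hnQ₂⟩ := hk₂
    have hbl₁ : blkOf π k₁ = D₁ := blkOf_eq hdisj hD₁ hkD₁
    have hbl₂ : blkOf π k₂ = D₂ := blkOf_eq hdisj hD₂ hkD₂
    have heq' : blkOf π k₁ = blkOf π k₂ := heq
    have hDD : D₁ = D₂ := by rw [← hbl₁, ← hbl₂, heq']
    have habove : ∀ k, ¬ (B ∩ Finset.Icc 1 k).Nonempty → ∀ b ∈ B, k < b := by
      intro k hnQ b hb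
      by_contra hle
      push_neg at hle
      have hb1 : 1 ≤ b := (Finset.mem_Icc.mp (hmem_blocks hB hb)).1
      exact hnQ ⟨b, Finset.mem_inter.mpr ⟨hb, Finset.mem_Icc.mpr ⟨hb1, hle⟩⟩⟩
    rcases lt_trichotomy k₁ k₂ with hlt | heqk | hlt
    · exfalso
      have hj₁le : j₁ ≤ k₂ := hsucc₁ k₂ (hDD ▸ hkD₂) hlt
      obtain ⟨b, hbint⟩ := hint₁
      rw [Finset.mem_inter, Finset.mem_Ioo] at hbint
      have : k₂ < b := habove k₂ hnQ₂ b hbint.1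
      omega
    · exact heqk
    · exfalso
      have hj₂le : j₂ ≤ k₁ := hsucc₂ k₁ (hDD ▸ hkD₁) hlt
      obtain ⟨b, hbint⟩ := hint₂
      rw [Finset.mem_inter, Finset.mem_Ioo] at hbint
      have : k₁ < b := habove k₁ hnQ₁ b hbint.1
      omega
  · -- surjective
    intro C hC
    simp only [Finset.mem_filter] at hC
    obtain ⟨hCπ, ⟨c₀, hc₀C, hc₀lt⟩, ⟨c₁, hc₁C, b₁, hb₁B, hb₁c₁⟩⟩ := hC
    have hCneB : C ≠ B := by
      intro h
      subst h
      exact lt_irrefl c₀ (hc₀lt c₀ hc₀C)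
    -- the largest element of C below m
    have hTne : (C.filter (· < m)).Nonempty :=
      ⟨c₀, Finset.mem_filter.mpr ⟨hc₀C, hc₀lt m hmB⟩⟩
    set k : ℕ := (C.filter (· < m)).max' hTne with hkdef
    have hkmem : k ∈ C.filter (· < m) := Finset.max'_mem _ hTne
    have hkC : k ∈ C := (Finset.mem_filter.mp hkmem).1
    have hkm : k < m := (Finset.mem_filter.mp hkmem).2
    -- the successor of k in C
    have hUne : (C.filter (fun x => k < x)).Nonempty := by
      refine ⟨c₁, Finset.mem_filter.mpr ⟨hc₁C, ?_⟩⟩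
      have : m ≤ b₁ := B.min'_le b₁ hb₁B
      omega
    set j : ℕ := (C.filter (fun x => k < x)).min' hUne with hjdef
    have hjmem : j ∈ C.filter (fun x => k < x) := Finset.min'_mem _ hUne
    have hjC : j ∈ C := (Finset.mem_filter.mp hjmem).1
    have hkj : k < j := (Finset.mem_filter.mp hjmem).2
    have hsucc : ∀ i ∈ C, k < i → j ≤ i := by
      intro i hi hki
      exact Finset.min'_le _ i (Finset.mem_filter.mpr ⟨hi, hki⟩)
    have hmj : m < j := by
      rcases lt_trichotomy j m with h | h | h
      · exfalso
        have : j ∈ C.filter (· < m) := Finset.mem_filter.mpr ⟨hjC, h⟩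
        have := Finset.le_max' _ j this
        omega
      · exfalso
        have : Disjoint C B := hdisj C hCπ B hB hCneB
        exact Finset.disjoint_left.mp this hjC (h ▸ hmB)
      · exact h
    refine ⟨k, ?_, blkOf_eq hdisj hCπ hkC⟩
    refine Finset.mem_filter.mpr ⟨hmem_blocks hCπ hkC, ⟨C, hCπ, hkC, j, hjC, hkj, hsucc, ?_⟩, ?_⟩
    · exact ⟨m, Finset.mem_inter.mpr ⟨hmB, Finset.mem_Ioo.mpr ⟨hkm, hmj⟩⟩⟩
    · rintro ⟨b, hb⟩
      rw [Finset.mem_inter, Finset.mem_Icc] at hb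
      have : m ≤ b := B.min'_le b hb.1
      omega

theorem rc_eq_rc_add_sum
    (n : ℕ) (π : Finset (Finset ℕ))
    (hempty : ∅ ∉ π)
    (hdisj : ∀ B ∈ π, ∀ C ∈ π, B ≠ C → Disjoint B C)
    (hcover : π.biUnion id = Finset.Icc 1 n)
    (S : Finset (Finset ℕ)) (hS : S ⊆ π) :
    rc n π S =
      rc n π ∅ +
        ∑ B ∈ S, (π.filter (fun C =>
          (∃ c ∈ C, ∀ b ∈ B, c < b) ∧ (∃ c ∈ C, ∃ b ∈ B, b < c))).card := by
  classical
  have hsplit : ∀ k, rcAt π S k = rcAt π ∅ k +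
      (S.filter (fun C =>
        (∃ B ∈ π, k ∈ B ∧ ∃ j ∈ B, k < j ∧ (∀ i ∈ B, k < i → j ≤ i) ∧
          (C ∩ Finset.Ioo k j).Nonempty)
        ∧ ¬ (C ∩ Finset.Icc 1 k).Nonempty)).card := by
    intro k
    unfold rcAt
    have h1 : π.filter (fun C =>
        (∃ B ∈ π, k ∈ B ∧ ∃ j ∈ B, k < j ∧ (∀ i ∈ B, k < i → j ≤ i) ∧
          (C ∩ Finset.Ioo k j).Nonempty)
        ∧ (C ∈ S ∨ (C ∩ Finset.Icc 1 k).Nonempty))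
      = π.filter (fun C =>
          ((∃ B ∈ π, k ∈ B ∧ ∃ j ∈ B, k < j ∧ (∀ i ∈ B, k < i → j ≤ i) ∧
            (C ∩ Finset.Ioo k j).Nonempty)
          ∧ (C ∈ (∅ : Finset (Finset ℕ)) ∨ (C ∩ Finset.Icc 1 k).Nonempty))
          ∨ (C ∈ S ∧ ((∃ B ∈ π, k ∈ B ∧ ∃ j ∈ B, k < j ∧ (∀ i ∈ B, k < i → j ≤ i) ∧
              (C ∩ Finset.Ioo k j).Nonempty)
            ∧ ¬ (C ∩ Finset.Icc 1 k).Nonempty))) := by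
      apply Finset.filter_congr
      intro C _
      simp only [Finset.notMem_empty, false_or]
      constructor
      · rintro ⟨hP, hSQ⟩
        by_cases hQ : (C ∩ Finset.Icc 1 k).Nonempty
        · exact Or.inl ⟨hP, hQ⟩
        · rcases hSQ with hCS | hQ'
          · exact Or.inr ⟨hCS, hP, hQ⟩
          · exact absurd hQ' hQ
      · rintro (⟨hP, hQ⟩ | ⟨hCS, hP, hnQ⟩)
        · exact ⟨hP, Or.inr hQ⟩
        · exact ⟨hP, Or.inl hCS⟩
    rw [h1, Finset.filter_or, Finset.card_union_of_disjoint]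
    · congr 1
      apply congrArg Finset.card
      ext C
      simp only [Finset.mem_filter]
      constructor
      · rintro ⟨hCπ, hCS, hrest⟩
        exact ⟨hCS, hrest⟩
      · rintro ⟨hCS, hrest⟩
        exact ⟨hS hCS, hCS, hrest⟩
    · rw [Finset.disjoint_left]
      intro C h1' h2'
      simp only [Finset.mem_filter] at h1' h2'
      rcases h1'.2.2 with h | hQ
      · exact absurd h (Finset.notMem_empty C)
      · exact h2'.2.2.2 hQ
  unfold rc
  rw [Finset.sum_congr rfl (fun k _ => hsplit k), Finset.sum_add_distrib]
  congr 1
  have hswap : ∀ k, (S.filter (fun C =>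
        (∃ B ∈ π, k ∈ B ∧ ∃ j ∈ B, k < j ∧ (∀ i ∈ B, k < i → j ≤ i) ∧
          (C ∩ Finset.Ioo k j).Nonempty)
        ∧ ¬ (C ∩ Finset.Icc 1 k).Nonempty)).card
      = ∑ C ∈ S, if ((∃ B ∈ π, k ∈ B ∧ ∃ j ∈ B, k < j ∧ (∀ i ∈ B, k < i → j ≤ i) ∧
          (C ∩ Finset.Ioo k j).Nonempty)
        ∧ ¬ (C ∩ Finset.Icc 1 k).Nonempty) then 1 else 0 := by
    intro k
    rw [Finset.card_filter]
  rw [Finset.sum_congr rfl (fun k _ => hswap k), Finset.sum_comm]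
  refine Finset.sum_congr rfl ?_
  intro B hBS
  rw [← Finset.card_filter]
  exact key_count n π hempty hdisj hcover B (hS hBS)
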